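/- Let s ≥ 2 and let 1 ≤ k_1 ≤ k_2 ≤ ⋯ ≤ k_s < n and 1 < l_1 ≤ l_2 ≤ ⋯ ≤ l_s ≤ n satisfy k_i < l_i and l_i − k_i + 1 ≥ m for all i. Set J := J_{k_1 l_1} J_{k_2 l_2} ⋯ J_{k_s l_s}, and let f_1 > f_2 > ⋯ > f_r be all diagonal monomials of Y_{k_1 l_1}, ordered decreasingly by τ. Fix 0 ≤ u ≤ r−1, write f_{u+1} = X_{1c_1}X_{2c_2}⋯X_{mc_m}, and set c_0 = k_1 − 1. Then the colon ideal (⟨J, f_1, …, f_u⟩ : f_{u+1}) equals the ideal generated by J_{k_2 l_2} ⋯ J_{k_s l_s} together with the variables X_{ib} with 1 ≤ i ≤ m and c_{i−1} < b < c_i. -/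

import Mathlib

open MvPolynomial

/-- The exponent vector of the diagonal monomial with column sequence `c`
(rows `1,…,m`, row `i` contributing the variable `X (i, c i)`). -/
noncomputable def expVec (m : ℕ) (c : ℕ → ℕ) : (ℕ × ℕ) →₀ ℕ :=
  ∑ i ∈ Finset.Icc 1 m, Finsupp.single (i, c i) 1

/-- The diagonal monomial `X_{1 c₁} X_{2 c₂} ⋯ X_{m c_m}`. -/
noncomputable def diagMon (K : Type*) [Field K] (m : ℕ) (c : ℕ → ℕ) :
    MvPolynomial (ℕ × ℕ) K :=
  ∏ i ∈ Finset.Icc 1 m, MvPolynomial.X (i, c i)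

/-- `tauGt a b` : the monomial with exponent vector `a` is strictly larger than the one
with exponent vector `b` in the lexicographic monomial order τ induced by
`X 11 > X 12 > ⋯ > X 1n > X 21 > ⋯ > X mn` : at the most significant variable where
they differ (i.e. the lexicographically smallest index pair), `a` has the bigger exponent. -/
def tauGt (a b : (ℕ × ℕ) →₀ ℕ) : Prop :=
  ∃ p : ℕ × ℕ, b p < a p ∧
    ∀ q : ℕ × ℕ, (q.1 < p.1 ∨ (q.1 = p.1 ∧ q.2 < p.2)) → a q = b q

/-- `c` is the column sequence of a diagonal monomial of the submatrix `Y_{kl}`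
(columns `k` through `l`): strictly increasing on `1,…,m` with values in `[k,l]`. -/
def IsDiagSeq (m k l : ℕ) (c : ℕ → ℕ) : Prop :=
  (∀ i, 1 ≤ i → i < m → c i < c (i + 1)) ∧ k ≤ c 1 ∧ c m ≤ l

/-- The ideal `J_{kl}` of `K[X]` generated by all diagonal monomials of `Y_{kl}`. -/
noncomputable def Jkl (K : Type*) [Field K] (m k l : ℕ) : Ideal (MvPolynomial (ℕ × ℕ) K) :=
  Ideal.span {g | ∃ c, IsDiagSeq m k l c ∧ g = diagMon K m c}

lemma expVec_apply (m : ℕ) (c : ℕ → ℕ) (i b : ℕ) :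
    expVec m c (i, b) = if i ∈ Finset.Icc 1 m ∧ c i = b then 1 else 0 := by
  classical
  rw [expVec, Finsupp.finset_sum_apply]
  by_cases hi : i ∈ Finset.Icc 1 m
  · rw [Finset.sum_eq_single_of_mem i hi]
    · simp [Finsupp.single_apply, hi, Prod.ext_iff]
    · intro j hj hji
      simp [Finsupp.single_apply, Prod.ext_iff, hji]
  · rw [Finset.sum_eq_zero, if_neg (by tauto)]
    intro j hj
    have : j ≠ i := fun h => hi (h ▸ hj)
    simp [Finsupp.single_apply, Prod.ext_iff, this]

-- product of monomials

lemma prod_monomial {K : Type*} [Field K] {ι : Type*} (t : Finset ι) (e : ι → ((ℕ × ℕ) →₀ ℕ)) :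
    (∏ i ∈ t, monomial (e i) (1 : K)) = monomial (∑ i ∈ t, e i) 1 := by
  classical
  induction t using Finset.induction_on with
  | empty => simp
  | insert _ _ h ih => rw [Finset.prod_insert h, Finset.sum_insert h, ih, monomial_mul, one_mul]

lemma diagMon_eq_monomial {K : Type*} [Field K] (m : ℕ) (c : ℕ → ℕ) :
    diagMon K m c = monomial (expVec m c) (1 : K) := by
  rw [diagMon, expVec, ← prod_monomial]
  exact Finset.prod_congr rfl fun i _ => by rw [← X_pow_eq_monomial, pow_one]

lemma Jkl_eq_span_monomial (K : Type*) [Field K] (m k l : ℕ) :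
    Jkl K m k l = Ideal.span ((fun v => monomial v (1 : K)) ''
      {v | ∃ c, IsDiagSeq m k l c ∧ v = expVec m c}) := by
  unfold Jkl
  congr 1
  ext g
  constructor
  · rintro ⟨c, hc, rfl⟩
    exact ⟨expVec m c, ⟨c, hc, rfl⟩, (diagMon_eq_monomial m c).symm⟩
  · rintro ⟨v, ⟨c, hc, rfl⟩, rfl⟩
    exact ⟨c, hc, (diagMon_eq_monomial m c).symm⟩

lemma prod_Jkl (K : Type*) [Field K] (m : ℕ) (k l : ℕ → ℕ) (t : Finset ℕ) :
    (∏ j ∈ t, Jkl K m (k j) (l j)) =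
      Ideal.span ((fun v => monomial v (1 : K)) ''
        {v | ∃ a : ℕ → ℕ → ℕ, (∀ j ∈ t, IsDiagSeq m (k j) (l j) (a j)) ∧
          v = ∑ j ∈ t, expVec m (a j)}) := by
  classical
  induction t using Finset.induction_on with
  | empty =>
    have hset : {v : (ℕ × ℕ) →₀ ℕ | ∃ a : ℕ → ℕ → ℕ,
        (∀ j ∈ (∅ : Finset ℕ), IsDiagSeq m (k j) (l j) (a j)) ∧
        v = ∑ j ∈ (∅ : Finset ℕ), expVec m (a j)} = {0} := by
      ext v
      constructor
      · rintro ⟨a, -, rfl⟩; simp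
      · rintro rfl
        exact ⟨fun _ _ => 0, by simp, by simp⟩
    rw [Finset.prod_empty, hset]
    simp only [Set.image_singleton, monomial_zero', C_1, Ideal.span_singleton_one,
      Ideal.one_eq_top]
  | @insert j₀ t hj₀ ih =>
    rw [Finset.prod_insert hj₀, ih, Jkl_eq_span_monomial, Ideal.span_mul_span']
    congr 1
    ext x
    constructor
    · rintro ⟨-, ⟨u, ⟨c0, hc0, rfl⟩, rfl⟩, -, ⟨v, ⟨a, ha, rfl⟩, rfl⟩, rfl⟩
      refine ⟨expVec m c0 + ∑ j ∈ t, expVec m (a j),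
        ⟨Function.update a j₀ c0, ?_, ?_⟩, by simp [monomial_mul]⟩
      · intro j hj
        rcases Finset.mem_insert.mp hj with rfl | hj2
        · simpa [Function.update_self] using hc0
        · rw [Function.update_of_ne (by rintro rfl; exact hj₀ hj2)]
          exact ha j hj2
      · rw [Finset.sum_insert hj₀, Function.update_self]
        congr 1
        refine Finset.sum_congr rfl fun j hj => ?_
        rw [Function.update_of_ne (by rintro rfl; exact hj₀ hj)]
    · rintro ⟨v, ⟨a, ha, rfl⟩, rfl⟩
      rw [Finset.sum_insert hj₀]
      exact ⟨monomial (expVec m (a j₀)) 1,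
        ⟨expVec m (a j₀), ⟨a j₀, ha j₀ (Finset.mem_insert_self _ _), rfl⟩, rfl⟩,
        monomial (∑ j ∈ t, expVec m (a j)) 1,
        ⟨∑ j ∈ t, expVec m (a j),
          ⟨a, fun j hj => ha j (Finset.mem_insert_of_mem hj), rfl⟩, rfl⟩,
        by simp [monomial_mul]⟩

lemma mul_monomial_mem_span_iff {K : Type*} [Field K] (x : MvPolynomial (ℕ × ℕ) K)
    (d : (ℕ × ℕ) →₀ ℕ) (S : Set ((ℕ × ℕ) →₀ ℕ)) :
    x * monomial d 1 ∈ Ideal.span ((fun v => monomial v (1 : K)) '' S) ↔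
      ∀ e ∈ x.support, ∃ si ∈ S, si ≤ e + d := by
  rw [mem_ideal_span_monomial_image]
  constructor
  · intro h e he
    have hmem : e + d ∈ (x * monomial d 1).support := by
      rw [mem_support_iff, coeff_mul_monomial', if_pos le_add_self, add_tsub_cancel_right,
        mul_one]
      exact mem_support_iff.mp he
    exact h _ hmem
  · intro h xi hxi
    rw [mem_support_iff, coeff_mul_monomial'] at hxi
    by_cases hd : d ≤ xi
    · rw [if_pos hd, mul_one] at hxi
      obtain ⟨si, hsi, hle⟩ := h (xi - d) (mem_support_iff.mpr hxi)
      exact ⟨si, hsi, hle.trans (le_of_eq (tsub_add_cancel_of_le hd))⟩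
    · rw [if_neg hd] at hxi
      exact absurd rfl hxi

lemma mem_span_monomial_iff {K : Type*} [Field K] (x : MvPolynomial (ℕ × ℕ) K)
    (S : Set ((ℕ × ℕ) →₀ ℕ)) :
    x ∈ Ideal.span ((fun v => monomial v (1 : K)) '' S) ↔
      ∀ e ∈ x.support, ∃ si ∈ S, si ≤ e :=
  mem_ideal_span_monomial_image

lemma list_sum_map_getD (L : List ℕ) (f : ℕ → ℕ) :
    (L.map f).sum = ∑ q ∈ Finset.range L.length, f (L.getD q 0) := by
  induction L with
  | nil => simp
  | cons x L ih =>
    rw [List.map_cons, List.sum_cons, List.length_cons, Finset.sum_range_succ']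
    simp only [List.getD_cons_succ, List.getD_cons_zero, ih]
    ring

lemma sorted_getD_mono {L : List ℕ} (h : L.Pairwise (· ≤ ·)) {p q : ℕ} (hpq : p ≤ q)
    (hq : q < L.length) : L.getD p 0 ≤ L.getD q 0 := by
  have hp : p < L.length := lt_of_le_of_lt hpq hq
  rw [List.getD_eq_getElem _ _ hp, List.getD_eq_getElem _ _ hq]
  exact h.rel_get_of_le (a := ⟨p, hp⟩) (b := ⟨q, hq⟩) hpq

lemma sum_getD_sort (s : ℕ) (g f : ℕ → ℕ) :
    ∑ q ∈ Finset.range (Multiset.sort ((Finset.Icc 1 s).val.map g) (· ≤ ·)).length,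
        f ((Multiset.sort ((Finset.Icc 1 s).val.map g) (· ≤ ·)).getD q 0)
      = ∑ j ∈ Finset.Icc 1 s, f (g j) := by
  rw [← list_sum_map_getD]
  have h1 : ((Multiset.sort ((Finset.Icc 1 s).val.map g) (· ≤ ·)).map f : Multiset ℕ)
      = Multiset.map f ((Finset.Icc 1 s).val.map g) := by
    rw [← Multiset.map_coe, Multiset.sort_eq]
  calc ((Multiset.sort ((Finset.Icc 1 s).val.map g) (· ≤ ·)).map f).sum
      = (((Multiset.sort ((Finset.Icc 1 s).val.map g) (· ≤ ·)).map f : Multiset ℕ)).sum := by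
        rw [Multiset.sum_coe]
    _ = (Multiset.map f ((Finset.Icc 1 s).val.map g)).sum := by rw [h1]
    _ = (Multiset.map (fun j => f (g j)) (Finset.Icc 1 s).val).sum := by
        rw [Multiset.map_map]; rfl
    _ = ∑ j ∈ Finset.Icc 1 s, f (g j) := rfl

lemma sum_Icc_shift (s : ℕ) (f : ℕ → ℕ) :
    ∑ t ∈ Finset.Icc 1 s, f (t - 1) = ∑ q ∈ Finset.range s, f q := by
  refine Finset.sum_nbij' (fun t => t - 1) (fun q => q + 1) ?_ ?_ ?_ ?_ ?_ <;>
    intro t ht <;>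
    simp only [Finset.mem_Icc, Finset.mem_range] at * <;>
    first
      | omega
      | (congr 1; omega)

lemma Icc_one_eq_insert {s : ℕ} (hs : 1 ≤ s) :
    Finset.Icc 1 s = insert 1 (Finset.Icc 2 s) := by
  ext x; simp only [Finset.mem_Icc, Finset.mem_insert]; omega

lemma prod_case {m s : ℕ} {k l : ℕ → ℕ} {c : ℕ → ℕ} (hm : 1 ≤ m) (hs : 1 ≤ s)
    (hk1 : 1 ≤ k 1) (hkmono : ∀ t j, 1 ≤ t → t ≤ j → j ≤ s → k t ≤ k j)
    (hlmono : ∀ t j, 1 ≤ t → t ≤ j → j ≤ s → l t ≤ l j)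
    (hc0 : c 0 = k 1 - 1)
    (e : (ℕ × ℕ) →₀ ℕ) (a : ℕ → ℕ → ℕ)
    (ha : ∀ j ∈ Finset.Icc 1 s, IsDiagSeq m (k j) (l j) (a j))
    (h : (∑ j ∈ Finset.Icc 1 s, expVec m (a j)) ≤ e + expVec m c) :
    (∃ i b, 1 ≤ i ∧ i ≤ m ∧ c (i - 1) < b ∧ b < c i ∧ 1 ≤ e (i, b)) ∨
      (∃ b : ℕ → ℕ → ℕ, (∀ j ∈ Finset.Icc 2 s, IsDiagSeq m (k j) (l j) (b j)) ∧
        (∑ j ∈ Finset.Icc 2 s, expVec m (b j)) ≤ e) := by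
  classical
  have hpt : ∀ i b : ℕ, (∑ j ∈ Finset.Icc 1 s, expVec m (a j) (i, b)) ≤
      e (i, b) + expVec m c (i, b) := by
    intro i b
    have := h (i, b)
    rwa [Finsupp.finset_sum_apply, Finsupp.add_apply] at this
  by_cases hgap : ∃ j ∈ Finset.Icc 1 s, ∃ i ∈ Finset.Icc 1 m,
      c (i - 1) < a j i ∧ a j i < c i
  · obtain ⟨j, hj, i, hi, h1, h2⟩ := hgap
    left
    refine ⟨i, a j i, (Finset.mem_Icc.mp hi).1, (Finset.mem_Icc.mp hi).2, h1, h2, ?_⟩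
    have hterm : expVec m (a j) (i, a j i) = 1 := by
      rw [expVec_apply, if_pos ⟨hi, rfl⟩]
    have hsum : expVec m (a j) (i, a j i) ≤
        ∑ j' ∈ Finset.Icc 1 s, expVec m (a j') (i, a j i) :=
      Finset.single_le_sum (f := fun j' => expVec m (a j') (i, a j i))
        (fun _ _ => Nat.zero_le _) hj
    have hcz : expVec m c (i, a j i) = 0 := by
      rw [expVec_apply, if_neg (by rintro ⟨-, hh⟩; omega)]
    have := hpt i (a j i)
    omega
  · push_neg at hgap
    have hge : ∀ j ∈ Finset.Icc 1 s, ∀ i, 1 ≤ i → i ≤ m → c i ≤ a j i := by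
      intro j hj i
      induction i with
      | zero => omega
      | succ i ih =>
        intro h1 h2
        obtain ⟨hinc, hk, hl⟩ := ha j hj
        have hkj : k 1 ≤ k j := hkmono 1 j le_rfl (Finset.mem_Icc.mp hj).1
          (Finset.mem_Icc.mp hj).2
        rcases Nat.eq_zero_or_pos i with rfl | hi1
        · show c 1 ≤ a j 1
          have hgt : c 0 < a j 1 := by omega
          have := hgap j hj 1 (Finset.mem_Icc.mpr ⟨le_rfl, h2⟩)
          simp only [Nat.sub_self] at this
          omega
        · have hci : c i ≤ a j i := ih (by omega) (by omega)
          have hstep : a j i < a j (i + 1) := hinc i hi1 (by omega)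
          have := hgap j hj (i + 1) (Finset.mem_Icc.mpr ⟨by omega, h2⟩)
          simp only [Nat.add_sub_cancel] at this
          omega
    set L : ℕ → List ℕ :=
      fun i => Multiset.sort ((Finset.Icc 1 s).val.map (fun j => a j i)) (· ≤ ·) with hL
    have hlen : ∀ i, (L i).length = s := by
      intro i
      rw [hL]
      rw [Multiset.length_sort, Multiset.card_map]
      simp
    have hsort : ∀ i, (L i).Pairwise (· ≤ ·) := fun i => Multiset.pairwise_sort _ _
    have hcount : ∀ (i : ℕ) (f : ℕ → ℕ),
        (∑ q ∈ Finset.range s, f ((L i).getD q 0)) =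
          ∑ j ∈ Finset.Icc 1 s, f (a j i) := by
      intro i f
      conv_lhs => rw [← hlen i]
      exact sum_getD_sort s (fun j => a j i) f
    have hmemL : ∀ i q, q < s → ∃ j ∈ Finset.Icc 1 s, (L i).getD q 0 = a j i := by
      intro i q hq
      have hq' : q < (L i).length := by rw [hlen i]; exact hq
      have hmem : (L i).getD q 0 ∈ L i := by
        rw [List.getD_eq_getElem _ _ hq']
        exact List.getElem_mem _
      have : (L i).getD q 0 ∈ ((Finset.Icc 1 s).val.map (fun j => a j i)) := by
        rw [← Multiset.sort_eq ((Finset.Icc 1 s).val.map (fun j => a j i)) (· ≤ ·),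
          Multiset.mem_coe]
        exact hmem
      obtain ⟨j, hj, hj2⟩ := Multiset.mem_map.mp this
      exact ⟨j, hj, hj2.symm⟩
    set w : ℕ → ℕ → ℕ := fun t i => (L i).getD (t - 1) 0 with hw
    have hwinc : ∀ t, 1 ≤ t → t ≤ s → ∀ i, 1 ≤ i → i < m → w t i < w t (i + 1) := by
      intro t ht1 hts i hi1 him
      set x := w t (i + 1) with hx
      have step1 : t ≤ ∑ q ∈ Finset.range s,
          (if (L (i+1)).getD q 0 ≤ x then 1 else 0) := by
        calc t = ∑ _q ∈ Finset.range t, 1 := by simp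
          _ ≤ ∑ q ∈ Finset.range t, (if (L (i+1)).getD q 0 ≤ x then 1 else 0) := by
              refine Finset.sum_le_sum fun q hq => ?_
              have hq' := Finset.mem_range.mp hq
              rw [if_pos]
              exact sorted_getD_mono (hsort (i+1)) (by omega) (by rw [hlen]; omega)
          _ ≤ _ := Finset.sum_le_sum_of_subset
              (Finset.range_subset_range.mpr (by omega))
      rw [hcount (i+1) (fun z => if z ≤ x then 1 else 0)] at step1
      have step3 : (∑ j ∈ Finset.Icc 1 s, (if a j (i+1) ≤ x then 1 else 0)) ≤
          ∑ j ∈ Finset.Icc 1 s, (if a j i < x then 1 else 0) := by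
        refine Finset.sum_le_sum fun j hj => ?_
        have hstep : a j i < a j (i + 1) := (ha j hj).1 i hi1 him
        split_ifs with p1 p2
        · rfl
        · omega
        · exact Nat.zero_le _
        · rfl
      have step4 : t ≤ ∑ q ∈ Finset.range s, (if (L i).getD q 0 < x then 1 else 0) := by
        rw [hcount i (fun z => if z < x then 1 else 0)]
        omega
      by_contra hcon
      push_neg at hcon
      have hbound : ∀ q ∈ Finset.range s,
          (if (L i).getD q 0 < x then 1 else 0) ≤ (if q < t - 1 then 1 else 0) := by
        intro q hq
        split_ifs with p1 p2
        · rfl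
        · exfalso
          have : w t i ≤ (L i).getD q 0 :=
            sorted_getD_mono (hsort i) (by omega) (by rw [hlen]; exact Finset.mem_range.mp hq)
          omega
        · exact Nat.zero_le _
        · rfl
      have hle : (∑ q ∈ Finset.range s, (if (L i).getD q 0 < x then 1 else 0)) ≤
          ∑ q ∈ Finset.range s, (if q < t - 1 then 1 else 0) :=
        Finset.sum_le_sum hbound
      have hcard : (∑ q ∈ Finset.range s, (if q < t - 1 then 1 else 0)) ≤ t - 1 := by
        rw [← Finset.card_filter]
        calc ((Finset.range s).filter (fun q => q < t - 1)).card
            ≤ (Finset.range (t-1)).card := Finset.card_le_card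
              (fun q hq => by
                simp only [Finset.mem_filter, Finset.mem_range] at *
                exact hq.2)
          _ = t - 1 := Finset.card_range _
      omega
    have hw1 : ∀ t, 1 ≤ t → t ≤ s → k t ≤ w t 1 := by
      intro t ht1 hts
      by_contra hcon
      push_neg at hcon
      have step1 : t ≤ ∑ q ∈ Finset.range s,
          (if (L 1).getD q 0 < k t then 1 else 0) := by
        calc t = ∑ _q ∈ Finset.range t, 1 := by simp
          _ ≤ ∑ q ∈ Finset.range t, (if (L 1).getD q 0 < k t then 1 else 0) := by
              refine Finset.sum_le_sum fun q hq => ?_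
              have hq' := Finset.mem_range.mp hq
              rw [if_pos]
              have : (L 1).getD q 0 ≤ w t 1 :=
                sorted_getD_mono (hsort 1) (by omega) (by rw [hlen]; omega)
              omega
          _ ≤ _ := Finset.sum_le_sum_of_subset (Finset.range_subset_range.mpr (by omega))
      rw [hcount 1 (fun z => if z < k t then 1 else 0)] at step1
      have step2 : (∑ j ∈ Finset.Icc 1 s, (if a j 1 < k t then 1 else 0)) ≤
          ∑ j ∈ Finset.Icc 1 s, (if j < t then 1 else 0) := by
        refine Finset.sum_le_sum fun j hj => ?_
        split_ifs with p1 p2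
        · rfl
        · exfalso
          have hkj : k t ≤ k j := hkmono t j ht1 (by omega) (Finset.mem_Icc.mp hj).2
          have : k j ≤ a j 1 := (ha j hj).2.1
          omega
        · exact Nat.zero_le _
        · rfl
      have hcard : (∑ j ∈ Finset.Icc 1 s, (if j < t then 1 else 0)) ≤ t - 1 := by
        rw [← Finset.card_filter]
        calc ((Finset.Icc 1 s).filter (fun j => j < t)).card
            ≤ (Finset.Icc 1 (t-1)).card := Finset.card_le_card
              (fun q hq => by
                simp only [Finset.mem_filter, Finset.mem_Icc] at *
                omega)
          _ = t - 1 := by rw [Nat.card_Icc]; omega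
      omega
    have hwm : ∀ t, 1 ≤ t → t ≤ s → w t m ≤ l t := by
      intro t ht1 hts
      by_contra hcon
      push_neg at hcon
      have step1 : s - (t - 1) ≤ ∑ q ∈ Finset.range s,
          (if l t < (L m).getD q 0 then 1 else 0) := by
        calc s - (t - 1) = ∑ _q ∈ Finset.Ico (t-1) s, 1 := by
              rw [Finset.sum_const, Nat.card_Ico, smul_eq_mul, mul_one]
          _ ≤ ∑ q ∈ Finset.Ico (t-1) s, (if l t < (L m).getD q 0 then 1 else 0) := by
              refine Finset.sum_le_sum fun q hq => ?_
              rw [if_pos]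
              have : w t m ≤ (L m).getD q 0 :=
                sorted_getD_mono (hsort m) (Finset.mem_Ico.mp hq).1
                  (by rw [hlen]; exact (Finset.mem_Ico.mp hq).2)
              omega
          _ ≤ _ := Finset.sum_le_sum_of_subset
              (fun q hq => Finset.mem_range.mpr (Finset.mem_Ico.mp hq).2)
      rw [hcount m (fun z => if l t < z then 1 else 0)] at step1
      have step2 : (∑ j ∈ Finset.Icc 1 s, (if l t < a j m then 1 else 0)) ≤
          ∑ j ∈ Finset.Icc 1 s, (if t < j then 1 else 0) := by
        refine Finset.sum_le_sum fun j hj => ?_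
        split_ifs with p1 p2
        · rfl
        · exfalso
          have hlj : l j ≤ l t := hlmono j t (Finset.mem_Icc.mp hj).1 (by omega) hts
          have : a j m ≤ l j := (ha j hj).2.2
          omega
        · exact Nat.zero_le _
        · rfl
      have hcard : (∑ j ∈ Finset.Icc 1 s, (if t < j then 1 else 0)) ≤ s - t := by
        rw [← Finset.card_filter]
        calc ((Finset.Icc 1 s).filter (fun j => t < j)).card
            ≤ (Finset.Icc (t+1) s).card := Finset.card_le_card
              (fun q hq => by
                simp only [Finset.mem_filter, Finset.mem_Icc] at *
                omega)
          _ = s - t := by rw [Nat.card_Icc]; omega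
      omega
    right
    refine ⟨w, ?_, ?_⟩
    · intro t ht
      obtain ⟨ht2, hts⟩ := Finset.mem_Icc.mp ht
      exact ⟨fun i h1 h2 => hwinc t (by omega) hts i h1 h2,
        hw1 t (by omega) hts, hwm t (by omega) hts⟩
    · rw [Finsupp.le_def]
      rintro ⟨i, b⟩
      rw [Finsupp.finset_sum_apply]
      by_cases hi : i ∈ Finset.Icc 1 m
      · simp only [expVec_apply]
        have hcnt : (∑ t ∈ Finset.Icc 1 s, (if w t i = b then 1 else 0)) =
            ∑ j ∈ Finset.Icc 1 s, (if a j i = b then 1 else 0) := by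
          have h1 : (∑ t ∈ Finset.Icc 1 s, (if w t i = b then 1 else 0)) =
              ∑ q ∈ Finset.range s, (if (L i).getD q 0 = b then 1 else 0) :=
            sum_Icc_shift s (fun q => if (L i).getD q 0 = b then 1 else 0)
          rw [h1]
          exact hcount i (fun z => if z = b then 1 else 0)
        have hgoal : (∑ t ∈ Finset.Icc 2 s,
              (if i ∈ Finset.Icc 1 m ∧ w t i = b then 1 else 0))
            = ∑ t ∈ Finset.Icc 2 s, (if w t i = b then 1 else 0) := by
          refine Finset.sum_congr rfl fun t _ => ?_
          by_cases hwt : w t i = b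
          · rw [if_pos ⟨hi, hwt⟩, if_pos hwt]
          · rw [if_neg (by tauto), if_neg hwt]
        have hup : (∑ j ∈ Finset.Icc 1 s, (if a j i = b then 1 else 0)) ≤
            e (i, b) + (if c i = b then 1 else 0) := by
          have hh := hpt i b
          simp only [expVec_apply] at hh
          calc (∑ j ∈ Finset.Icc 1 s, (if a j i = b then 1 else 0))
              = ∑ j ∈ Finset.Icc 1 s,
                  (if i ∈ Finset.Icc 1 m ∧ a j i = b then 1 else 0) := by
                refine Finset.sum_congr rfl fun j hj => ?_
                by_cases hab : a j i = b
                · rw [if_pos hab, if_pos ⟨hi, hab⟩]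
                · rw [if_neg hab, if_neg (by tauto)]
            _ ≤ e (i, b) + (if i ∈ Finset.Icc 1 m ∧ c i = b then 1 else 0) := hh
            _ ≤ e (i, b) + (if c i = b then 1 else 0) := by
                by_cases hcb : c i = b
                · simp [hcb, hi]
                · rw [if_neg (by tauto), if_neg hcb]
        by_cases hcb : c i = b
        · rw [if_pos hcb] at hup
          by_cases hex : ∃ t ∈ Finset.Icc 1 s, w t i = b
          · obtain ⟨t0, ht0, hwt0⟩ := hex
            have hw1b : w 1 i = b := by
              have h1le : w 1 i ≤ w t0 i := by
                refine sorted_getD_mono (hsort i) (by omega) ?_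
                rw [hlen]
                have := Finset.mem_Icc.mp ht0
                omega
              obtain ⟨j, hj, hjw⟩ := hmemL i 0 (by omega)
              have hcw : c i ≤ w 1 i := by
                have : w 1 i = a j i := hjw
                rw [this]
                exact hge j hj i (Finset.mem_Icc.mp hi).1 (Finset.mem_Icc.mp hi).2
              omega
            have hsplit : (∑ t ∈ Finset.Icc 1 s, (if w t i = b then 1 else 0)) =
                (if w 1 i = b then 1 else 0) +
                  ∑ t ∈ Finset.Icc 2 s, (if w t i = b then 1 else 0) := by
              rw [Icc_one_eq_insert hs, Finset.sum_insert (by simp)]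
            have h1 : (if w 1 i = b then 1 else 0) = 1 := if_pos hw1b
            omega
          · push_neg at hex
            have hz : (∑ t ∈ Finset.Icc 2 s,
                (if i ∈ Finset.Icc 1 m ∧ w t i = b then 1 else 0)) = 0 := by
              refine Finset.sum_eq_zero fun t ht => ?_
              rw [if_neg]
              rintro ⟨-, hh⟩
              refine hex t ?_ hh
              have := Finset.mem_Icc.mp ht
              exact Finset.mem_Icc.mpr ⟨by omega, this.2⟩
            omega
        · rw [if_neg hcb] at hup
          have hsub : (∑ t ∈ Finset.Icc 2 s, (if w t i = b then 1 else 0)) ≤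
              ∑ t ∈ Finset.Icc 1 s, (if w t i = b then 1 else 0) :=
            Finset.sum_le_sum_of_subset (by
              intro t ht
              simp only [Finset.mem_Icc] at *
              omega)
          omega
      · rw [Finset.sum_eq_zero]
        · exact Nat.zero_le _
        · intro t ht
          rw [expVec_apply, if_neg (by tauto)]

lemma gt_case {m k1 l1 : ℕ} {c : ℕ → ℕ} (hk1 : 1 ≤ k1)
    (hc : IsDiagSeq m k1 l1 c) (hc0 : c 0 = k1 - 1)
    (e : (ℕ × ℕ) →₀ ℕ) (a : ℕ → ℕ)
    (ha : IsDiagSeq m k1 l1 a) (hgt : tauGt (expVec m a) (expVec m c))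
    (h : expVec m a ≤ e + expVec m c) :
    ∃ i b, 1 ≤ i ∧ i ≤ m ∧ c (i - 1) < b ∧ b < c i ∧ 1 ≤ e (i, b) := by
  obtain ⟨p, hlt, hsig⟩ := hgt
  obtain ⟨i, b⟩ := p
  rw [expVec_apply, expVec_apply] at hlt
  have hai : i ∈ Finset.Icc 1 m ∧ a i = b := by
    by_contra hcon; rw [if_neg hcon] at hlt; omega
  obtain ⟨hiIcc, hab⟩ := hai
  have hcb : ¬ (i ∈ Finset.Icc 1 m ∧ c i = b) := by
    intro hcon; rw [if_pos hcon, if_pos ⟨hiIcc, hab⟩] at hlt; omega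
  have hcb' : c i ≠ b := fun hh => hcb ⟨hiIcc, hh⟩
  obtain ⟨hi1, him⟩ := Finset.mem_Icc.mp hiIcc
  subst hab
  have hlt2 : a i < c i := by
    rcases lt_trichotomy (a i) (c i) with hh | hh | hh
    · exact hh
    · exact absurd hh.symm hcb'
    · exfalso
      have hq := hsig (i, c i) (Or.inr ⟨rfl, hh⟩)
      rw [expVec_apply, expVec_apply] at hq
      have h2 : (if i ∈ Finset.Icc 1 m ∧ c i = c i then (1:ℕ) else 0) = 1 :=
        if_pos ⟨hiIcc, rfl⟩
      rw [h2] at hq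
      have h3 : i ∈ Finset.Icc 1 m ∧ a i = c i := by
        by_contra hcon; rw [if_neg hcon] at hq; omega
      omega
  have hlow : c (i - 1) < a i := by
    by_cases hone : i = 1
    · subst hone
      have hk : k1 ≤ a 1 := ha.2.1
      have h0 : (1 : ℕ) - 1 = 0 := rfl
      rw [h0]
      omega
    · have hsig2 := hsig (i - 1, c (i - 1)) (Or.inl (by omega))
      rw [expVec_apply, expVec_apply] at hsig2
      have h2 : (if i - 1 ∈ Finset.Icc 1 m ∧ c (i - 1) = c (i - 1) then (1:ℕ) else 0) = 1 :=
        if_pos ⟨Finset.mem_Icc.mpr ⟨by omega, by omega⟩, rfl⟩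
      rw [h2] at hsig2
      have hae : i - 1 ∈ Finset.Icc 1 m ∧ a (i - 1) = c (i - 1) := by
        by_contra hcon; rw [if_neg hcon] at hsig2; omega
      have hstep : a (i - 1) < a (i - 1 + 1) := ha.1 (i - 1) (by omega) (by omega)
      have hii : i - 1 + 1 = i := by omega
      rw [hii] at hstep
      omega
  refine ⟨i, a i, hi1, him, hlow, hlt2, ?_⟩
  have hp := h (i, a i)
  rw [Finsupp.add_apply, expVec_apply, expVec_apply] at hp
  rw [if_pos ⟨hiIcc, rfl⟩, if_neg (by rintro ⟨-, hh⟩; omega)] at hp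
  omega

lemma var_case {m k1 l1 : ℕ} {c : ℕ → ℕ} (hk1 : 1 ≤ k1)
    (hc : IsDiagSeq m k1 l1 c) (hc0 : c 0 = k1 - 1)
    {i b : ℕ} (hi1 : 1 ≤ i) (him : i ≤ m) (hlow : c (i - 1) < b) (hhigh : b < c i) :
    ∃ a, IsDiagSeq m k1 l1 a ∧ tauGt (expVec m a) (expVec m c) ∧
      ∀ e : (ℕ × ℕ) →₀ ℕ, 1 ≤ e (i, b) → expVec m a ≤ e + expVec m c := by
  classical
  refine ⟨Function.update c i b, ⟨?_, ?_, ?_⟩, ?_, ?_⟩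
  · intro i' h1 h2
    by_cases e1 : i' = i
    · subst e1
      rw [Function.update_self, Function.update_of_ne (by omega)]
      have := hc.1 i' h1 h2
      omega
    · by_cases e2 : i' + 1 = i
      · rw [Function.update_of_ne e1, e2, Function.update_self]
        have h3 : i - 1 = i' := by omega
        have h4 : c (i - 1) = c i' := by rw [h3]
        omega
      · rw [Function.update_of_ne e1, Function.update_of_ne e2]
        exact hc.1 i' h1 h2
  · by_cases e1 : (1 : ℕ) = i
    · rw [← e1, Function.update_self]
      have h3 : i - 1 = 0 := by omega
      have h4 : c (i - 1) = c 0 := by rw [h3]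
      omega
    · rw [Function.update_of_ne (fun hh => e1 hh)]
      exact hc.2.1
  · by_cases e1 : m = i
    · rw [← e1, Function.update_self]
      have h3 : c i ≤ c m := by rw [e1]
      have := hc.2.2
      omega
    · rw [Function.update_of_ne (fun hh => e1 hh)]
      exact hc.2.2
  · refine ⟨(i, b), ?_, ?_⟩
    · rw [expVec_apply, expVec_apply]
      have h1 : (if i ∈ Finset.Icc 1 m ∧ Function.update c i b i = b then (1:ℕ) else 0) = 1 :=
        if_pos ⟨Finset.mem_Icc.mpr ⟨hi1, him⟩, Function.update_self i b c⟩
      have h2 : (if i ∈ Finset.Icc 1 m ∧ c i = b then (1:ℕ) else 0) = 0 :=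
        if_neg (by rintro ⟨-, hh⟩; omega)
      rw [h1, h2]
      norm_num
    · rintro ⟨r, col⟩ hq
      rw [expVec_apply, expVec_apply]
      rcases hq with hr | ⟨hr, hcol⟩
      · simp only at hr
        have hri : r ≠ i := by omega
        rw [Function.update_of_ne hri]
      · simp only at hr hcol
        subst hr
        have ha' : ¬(r ∈ Finset.Icc 1 m ∧ Function.update c r b r = col) := by
          rintro ⟨-, hh⟩
          rw [Function.update_self] at hh
          omega
        have hc' : ¬(r ∈ Finset.Icc 1 m ∧ c r = col) := by
          rintro ⟨-, hh⟩
          omega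
        rw [if_neg ha', if_neg hc']
  · intro e he
    rw [Finsupp.le_def]
    rintro ⟨r, col⟩
    rw [Finsupp.add_apply, expVec_apply, expVec_apply]
    by_cases hcond : r ∈ Finset.Icc 1 m ∧ Function.update c i b r = col
    · rw [if_pos hcond]
      by_cases hri : r = i
      · subst hri
        have hcol : b = col := by
          have := hcond.2; rwa [Function.update_self] at this
        subst hcol
        have hite : (0:ℕ) ≤ if r ∈ Finset.Icc 1 m ∧ c r = b then 1 else 0 := Nat.zero_le _
        omega
      · have hcc : c r = col := by
          have := hcond.2; rwa [Function.update_of_ne hri] at this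
        rw [if_pos ⟨hcond.1, hcc⟩]
        omega
    · rw [if_neg hcond]
      exact Nat.zero_le _

/-- Lemma 2.4: Let `s ≥ 2`, `1 ≤ k₁ ≤ ⋯ ≤ k_s < n`,
`1 < l₁ ≤ ⋯ ≤ l_s ≤ n` with `k_i < l_i`, `l_i - k_i + 1 ≥ m`.  Set
`J = J_{k₁l₁}⋯J_{k_sl_s}` and let `f₁ > ⋯ > f_r` be all diagonal monomials of
`Y_{k₁l₁}` ordered decreasingly by τ.  Fix `0 ≤ u ≤ r - 1` and write
`f_{u+1} = X_{1c₁}⋯X_{mc_m}` (an arbitrary diagonal monomial of `Y_{k₁l₁}`),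
`c₀ = k₁ - 1`.  Then `(⟨J, f₁, …, f_u⟩ : f_{u+1})` equals the ideal generated by
`J_{k₂l₂}⋯J_{k_sl_s}` together with the variables `X_{ib}`, `1 ≤ i ≤ m`,
`c_{i-1} < b < c_i`.  Here `⟨f₁,…,f_u⟩` is the ideal generated by all diagonal
monomials of `Y_{k₁l₁}` that are τ-greater than `f_{u+1}`. -/
theorem stmt_10 (K : Type*) [Field K] (m n s : ℕ) (hm : 1 ≤ m) (hmn : m ≤ n) (hs : 2 ≤ s)
    (k l : ℕ → ℕ)
    (hk1 : 1 ≤ k 1) (hkmono : ∀ j, 1 ≤ j → j < s → k j ≤ k (j + 1)) (hks : k s < n)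
    (hl1 : 1 < l 1) (hlmono : ∀ j, 1 ≤ j → j < s → l j ≤ l (j + 1)) (hls : l s ≤ n)
    (hkl : ∀ j, 1 ≤ j → j ≤ s → k j < l j)
    (hlen : ∀ j, 1 ≤ j → j ≤ s → m ≤ l j - k j + 1)
    (c : ℕ → ℕ) (hc : IsDiagSeq m (k 1) (l 1) c) (hc0 : c 0 = k 1 - 1) :
    Submodule.colon
      ((∏ j ∈ Finset.Icc 1 s, Jkl K m (k j) (l j)) ⊔
        Ideal.span {g : MvPolynomial (ℕ × ℕ) K |
          ∃ a, IsDiagSeq m (k 1) (l 1) a ∧ tauGt (expVec m a) (expVec m c) ∧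
            g = diagMon K m a})
      (Ideal.span {diagMon K m c}) =
    (∏ j ∈ Finset.Icc 2 s, Jkl K m (k j) (l j)) ⊔
      Ideal.span {P : MvPolynomial (ℕ × ℕ) K |
        ∃ i b : ℕ, 1 ≤ i ∧ i ≤ m ∧ c (i - 1) < b ∧ b < c i ∧ P = MvPolynomial.X (i, b)} := by
  classical
  have hkm : ∀ j, j ≤ s → ∀ t, 1 ≤ t → t ≤ j → k t ≤ k j := by
    intro j
    induction j with
    | zero => intro _ t ht htj; omega
    | succ j ih =>
      intro hjs t ht htj
      rcases Nat.lt_or_ge t (j + 1) with h1 | h1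
      · exact le_trans (ih (by omega) t ht (by omega)) (hkmono j (by omega) (by omega))
      · have h2 : t = j + 1 := by omega
        rw [h2]
  have hlm : ∀ j, j ≤ s → ∀ t, 1 ≤ t → t ≤ j → l t ≤ l j := by
    intro j
    induction j with
    | zero => intro _ t ht htj; omega
    | succ j ih =>
      intro hjs t ht htj
      rcases Nat.lt_or_ge t (j + 1) with h1 | h1
      · exact le_trans (ih (by omega) t ht (by omega)) (hlmono j (by omega) (by omega))
      · have h2 : t = j + 1 := by omega
        rw [h2]
  have hset1 : {g : MvPolynomial (ℕ × ℕ) K |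
        ∃ a, IsDiagSeq m (k 1) (l 1) a ∧ tauGt (expVec m a) (expVec m c) ∧
          g = diagMon K m a}
      = (fun v => monomial v (1 : K)) '' {v | ∃ a, IsDiagSeq m (k 1) (l 1) a ∧
          tauGt (expVec m a) (expVec m c) ∧ v = expVec m a} := by
    ext g
    constructor
    · rintro ⟨a, h1, h2, rfl⟩
      exact ⟨expVec m a, ⟨a, h1, h2, rfl⟩, (diagMon_eq_monomial m a).symm⟩
    · rintro ⟨v, ⟨a, h1, h2, rfl⟩, rfl⟩
      exact ⟨a, h1, h2, (diagMon_eq_monomial m a).symm⟩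
  have hset2 : {P : MvPolynomial (ℕ × ℕ) K |
        ∃ i b : ℕ, 1 ≤ i ∧ i ≤ m ∧ c (i - 1) < b ∧ b < c i ∧ P = MvPolynomial.X (i, b)}
      = (fun v => monomial v (1 : K)) '' {v | ∃ i b : ℕ, 1 ≤ i ∧ i ≤ m ∧
          c (i - 1) < b ∧ b < c i ∧ v = Finsupp.single (i, b) 1} := by
    ext P
    constructor
    · rintro ⟨i, b, h1, h2, h3, h4, rfl⟩
      refine ⟨Finsupp.single (i, b) 1, ⟨i, b, h1, h2, h3, h4, rfl⟩, ?_⟩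
      show (monomial (Finsupp.single (i, b) 1)) (1 : K) = MvPolynomial.X (i, b)
      rw [← X_pow_eq_monomial, pow_one]
    · rintro ⟨v, ⟨i, b, h1, h2, h3, h4, rfl⟩, rfl⟩
      refine ⟨i, b, h1, h2, h3, h4, ?_⟩
      show (monomial (Finsupp.single (i, b) 1)) (1 : K) = MvPolynomial.X (i, b)
      rw [← X_pow_eq_monomial, pow_one]
  rw [prod_Jkl K m k l (Finset.Icc 1 s), prod_Jkl K m k l (Finset.Icc 2 s), hset1, hset2,
    ← Ideal.span_union, ← Ideal.span_union, ← Set.image_union, ← Set.image_union,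
    diagMon_eq_monomial m c]
  ext x
  constructor
  · intro hx
    rw [Ideal.mem_colon_span_singleton, mul_monomial_mem_span_iff] at hx
    rw [mem_span_monomial_iff]
    intro e he
    obtain ⟨si, hsi, hle⟩ := hx e he
    rcases hsi with ⟨a, ha, rfl⟩ | ⟨a, ha, hgt, rfl⟩
    · rcases prod_case hm (by omega) hk1 (fun t j ht htj hjs => hkm j hjs t ht htj)
        (fun t j ht htj hjs => hlm j hjs t ht htj) hc0 e a ha hle with
        ⟨i, b, h1, h2, h3, h4, h5⟩ | ⟨bfun, hb, hble⟩
      · exact ⟨Finsupp.single (i, b) 1, Or.inr ⟨i, b, h1, h2, h3, h4, rfl⟩,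
          Finsupp.single_le_iff.mpr h5⟩
      · exact ⟨_, Or.inl ⟨bfun, hb, rfl⟩, hble⟩
    · obtain ⟨i, b, h1, h2, h3, h4, h5⟩ := gt_case hk1 hc hc0 e a ha hgt hle
      exact ⟨Finsupp.single (i, b) 1, Or.inr ⟨i, b, h1, h2, h3, h4, rfl⟩,
        Finsupp.single_le_iff.mpr h5⟩
  · intro hx
    rw [mem_span_monomial_iff] at hx
    rw [Ideal.mem_colon_span_singleton, mul_monomial_mem_span_iff]
    intro e he
    obtain ⟨ti, hti, hle⟩ := hx e he
    rcases hti with ⟨bfun, hb, rfl⟩ | ⟨i, b, h1, h2, h3, h4, rfl⟩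
    · refine ⟨∑ j ∈ Finset.Icc 1 s, expVec m ((Function.update bfun 1 c) j),
        Or.inl ⟨Function.update bfun 1 c, ?_, rfl⟩, ?_⟩
      · intro j hj
        rcases eq_or_ne j 1 with rfl | hj1
        · rw [Function.update_self]; exact hc
        · rw [Function.update_of_ne hj1]
          refine hb j (Finset.mem_Icc.mpr ⟨?_, (Finset.mem_Icc.mp hj).2⟩)
          have := Finset.mem_Icc.mp hj
          omega
      · have hsplit : (∑ j ∈ Finset.Icc 1 s, expVec m ((Function.update bfun 1 c) j))
            = expVec m c + ∑ j ∈ Finset.Icc 2 s, expVec m (bfun j) := by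
          rw [Icc_one_eq_insert (by omega : 1 ≤ s), Finset.sum_insert (by simp),
            Function.update_self]
          congr 1
          refine Finset.sum_congr rfl fun j hj => ?_
          rw [Function.update_of_ne (by have := Finset.mem_Icc.mp hj; omega)]
        rw [hsplit, add_comm e (expVec m c)]
        exact add_le_add_right hle _
    · obtain ⟨a, ha, hgt, hle2⟩ := var_case hk1 hc hc0 h1 h2 h3 h4
      exact ⟨expVec m a, Or.inr ⟨a, ha, hgt, rfl⟩, hle2 e (Finsupp.single_le_iff.mp hle)⟩
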